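/- arXiv:0901.1627 — 2 statements merged into one kernel-verified Lean document; each statement's English description precedes it below -/
import Mathlib

section
/- Let K be a locally presentable category, (C, C^□) a cofibrant weak factorization system generated by a set I ⊆ C, (Cyl, γ, σ) a cartesian cylinder for (C, C^□), and S ⊆ C a subset. Then C^□ ⊆ W(Cyl,S,I); indeed, every dual strong deformation retract lies in W(Cyl,S,I). -/
/-!
Common definitions: weak factorization systems, functorial cylinders,
Cisinski's construction, localizers, locally presentable categories.
-/

universe w v u u₁ u₂ u₃

open CategoryTheory Limits Opposite

namespace Paper

variable {K : Type u} [Category.{v} K]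

/-- The class of maps with the right lifting property against all maps in `H`. -/
def Rlp (H : MorphismProperty K) : MorphismProperty K :=
  fun _ _ g => ∀ ⦃A B : K⦄ (h : A ⟶ B), H h → HasLiftingProperty h g

/-- The class of maps with the left lifting property against all maps in `H`. -/
def Llp (H : MorphismProperty K) : MorphismProperty K :=
  fun _ _ f => ∀ ⦃A B : K⦄ (h : A ⟶ B), H h → HasLiftingProperty f h

/-- Weak factorization system. -/
structure IsWFS (L R : MorphismProperty K) : Prop where
  llp_eq : L = Llp R
  rlp_eq : R = Rlp L
  factor : ∀ ⦃X Y : K⦄ (f : X ⟶ Y),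
    ∃ (Z : K) (l : X ⟶ Z) (r : Z ⟶ Y), L l ∧ R r ∧ l ≫ r = f

/-- A class of maps is essentially a (small) set. -/
def IsSmallClass (I : MorphismProperty K) : Prop :=
  Small.{v} (Σ (X : K) (Y : K), { f : X ⟶ Y // I f })

/-- Every object is cofibrant. -/
def AllCofibrant [HasInitial K] (L : MorphismProperty K) : Prop :=
  ∀ X : K, L (initial.to X)

/-- `L` is cofibrantly generated (by a set). -/
def CofGenerated (L : MorphismProperty K) : Prop :=
  ∃ I : MorphismProperty K, IsSmallClass I ∧ L = Llp (Rlp I)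

/-- intersection of two classes of maps -/
def interClass (A B : MorphismProperty K) : MorphismProperty K := fun _ _ f => A f ∧ B f

/-- closed under retracts in the arrow category -/
def RetractClosed (W : MorphismProperty K) : Prop :=
  ∀ ⦃f g : Arrow K⦄ (i : f ⟶ g) (r : g ⟶ f), i ≫ r = 𝟙 f → W g.hom → W f.hom

/-- the 2-out-of-3 property -/
def TwoOutOfThree (W : MorphismProperty K) : Prop :=
  (∀ ⦃X Y Z : K⦄ (f : X ⟶ Y) (g : Y ⟶ Z), W f → W g → W (f ≫ g)) ∧
  (∀ ⦃X Y Z : K⦄ (f : X ⟶ Y) (g : Y ⟶ Z), W f → W (f ≫ g) → W g) ∧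
  (∀ ⦃X Y Z : K⦄ (f : X ⟶ Y) (g : Y ⟶ Z), W g → W (f ≫ g) → W f)

/-- Quillen model structure, given by cofibrations, weak equivalences and fibrations. -/
structure IsModelStructure (Cof W Fib : MorphismProperty K) : Prop where
  retractClosed : RetractClosed W
  twoOutOfThree : TwoOutOfThree W
  wfs₁ : IsWFS Cof (interClass W Fib)
  wfs₂ : IsWFS (interClass Cof W) Fib

/-- the functor `X ↦ X + X` -/
@[simps] noncomputable def double (K : Type u) [Category.{v} K] [HasBinaryCoproducts K] :
    K ⥤ K where
  obj X := X ⨿ X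
  map f := coprod.map f f

/-- A functorial cylinder: a functor `C` together with natural transformations
`γ : X + X ⟶ C X` and `σ : C X ⟶ X` factoring the codiagonal. -/
structure Cylinder (K : Type u) [Category.{v} K] [HasBinaryCoproducts K] where
  C : K ⥤ K
  γ : double K ⟶ C
  σ : C ⟶ 𝟭 K
  fac : ∀ X : K, γ.app X ≫ σ.app X = coprod.desc (𝟙 X) (𝟙 X)

namespace Cylinder
variable [HasBinaryCoproducts K] (cyl : Cylinder K)

/-- `γ⁰` -/
noncomputable def γ₀ : 𝟭 K ⟶ cyl.C where
  app X := coprod.inl ≫ cyl.γ.app X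
  naturality X Y f := by
    have h := cyl.γ.naturality f
    dsimp [double] at h ⊢
    rw [Category.assoc, ← h, ← Category.assoc, ← Category.assoc, coprod.inl_map]

/-- `γ¹` -/
noncomputable def γ₁ : 𝟭 K ⟶ cyl.C where
  app X := coprod.inr ≫ cyl.γ.app X
  naturality X Y f := by
    have h := cyl.γ.naturality f
    dsimp [double] at h ⊢
    rw [Category.assoc, ← h, ← Category.assoc, ← Category.assoc, coprod.inr_map]

/-- `(Cyl, γ, σ)` is a cylinder for a weak factorization system whose left class is `L`
if each `γ_X` lies in `L`. -/
def IsCylinderFor (L : MorphismProperty K) : Prop := ∀ X : K, L (cyl.γ.app X)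

/-- the cylinder is final if each `σ_X` lies in `R`. -/
def IsFinal (R : MorphismProperty K) : Prop := ∀ X : K, R (cyl.σ.app X)

end Cylinder

section Star
variable [HasPushouts K] {F F' : K ⥤ K}

/-- `f ⋆ α`: the induced map from the pushout of `F f` along `α_X` to `F' Y`. -/
noncomputable def starMap (α : F ⟶ F') {X Y : K} (f : X ⟶ Y) :
    pushout (F.map f) (α.app X) ⟶ F'.obj Y :=
  pushout.desc (α.app Y) (F'.map f) (α.naturality f)

/-- the class `L` is stable under `(−) ⋆ α`. -/
def StableUnderStar (L : MorphismProperty K) (α : F ⟶ F') : Prop :=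
  ∀ ⦃X Y : K⦄ (f : X ⟶ Y), L f → L (starMap α f)

/-- the class `I ⋆ α = { f ⋆ α | f ∈ I }`. -/
def starClass (α : F ⟶ F') (I : MorphismProperty K) : MorphismProperty K :=
  fun _ _ g => ∃ (X Y : K) (f : X ⟶ Y), I f ∧ Arrow.mk g = Arrow.mk (starMap α f)

end Star

/-- the cylinder is cartesian with respect to the left class `L`:
the cylinder functor is a left adjoint and `L` is stable under `⋆γ`, `⋆γ⁰` and `⋆γ¹`. -/
structure Cylinder.IsCartesian [HasBinaryCoproducts K] [HasPushouts K]
    (cyl : Cylinder K) (L : MorphismProperty K) : Prop where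
  leftAdjoint : cyl.C.IsLeftAdjoint
  star_γ : StableUnderStar L cyl.γ
  star_γ₀ : StableUnderStar L cyl.γ₀
  star_γ₁ : StableUnderStar L cyl.γ₁

section Lambda
variable [HasBinaryCoproducts K] [HasPushouts K]

/-- `Λⁿ(Cyl,S,I)` -/
noncomputable def LambdaN (cyl : Cylinder K) (S I : MorphismProperty K) :
    ℕ → MorphismProperty K
  | 0 => fun _ _ f => S f ∨ starClass cyl.γ₀ I f ∨ starClass cyl.γ₁ I f
  | n + 1 => starClass cyl.γ (LambdaN cyl S I n)

/-- `Λ(Cyl,S,I)` -/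
noncomputable def Lambda (cyl : Cylinder K) (S I : MorphismProperty K) :
    MorphismProperty K :=
  fun _ _ f => ∃ n : ℕ, LambdaN cyl S I n f

/-- `T` is fibrant if `T → 1` has the right lifting property against `Λ(Cyl,S,I)`. -/
noncomputable def Fibrant [HasTerminal K] (cyl : Cylinder K) (S I : MorphismProperty K)
    (T : K) : Prop :=
  Rlp (Lambda cyl S I) (terminal.from T)

end Lambda

/-- `f` and `g` are homotopic: `(f|g)` factors through `γ_X`. -/
def Htp [HasBinaryCoproducts K] (cyl : Cylinder K) {X Y : K} (f g : X ⟶ Y) : Prop :=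
  ∃ h : cyl.C.obj X ⟶ Y, cyl.γ.app X ≫ h = coprod.desc f g

/-- symmetric-transitive closure of a relation -/
inductive STClos {α : Sort*} (r : α → α → Prop) : α → α → Prop
  | base : ∀ {x y : α}, r x y → STClos r x y
  | symm : ∀ {x y : α}, STClos r x y → STClos r y x
  | trans : ∀ {x y z : α}, STClos r x y → STClos r y z → STClos r x z

/-- the homotopy equivalence relation `∼`, the symmetric-transitive closure of `≃`. -/
def HtpEq [HasBinaryCoproducts K] (cyl : Cylinder K) {X Y : K} : (X ⟶ Y) → (X ⟶ Y) → Prop :=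
  STClos (Htp cyl)

/-- `W(Cyl,S,I)`: the maps `f : X ⟶ Y` such that for every fibrant `T` the induced map
`Hom(Y,T)/∼ → Hom(X,T)/∼` is bijective (expressed elementwise). -/
noncomputable def Weq [HasBinaryCoproducts K] [HasPushouts K] [HasTerminal K]
    (cyl : Cylinder K) (S I : MorphismProperty K) : MorphismProperty K :=
  fun X Y f => ∀ T : K, Fibrant cyl S I T →
    (∀ t : X ⟶ T, ∃ u : Y ⟶ T, HtpEq cyl (f ≫ u) t) ∧
    (∀ u v : Y ⟶ T, HtpEq cyl (f ≫ u) (f ≫ v) → HtpEq cyl u v)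

/-- pushout stability of a class of maps -/
def StableUnderPushout (L : MorphismProperty K) : Prop :=
  ∀ ⦃A B A' B' : K⦄ ⦃f : A ⟶ B⦄ ⦃g : A ⟶ A'⦄ ⦃f' : A' ⟶ B'⦄ ⦃g' : B ⟶ B'⦄,
    IsPushout g f f' g' → L f → L f'

/-- closure under transfinite composition of smooth (colimit preserving) chains -/
def ClosedUnderTransfiniteComposition (L : MorphismProperty K) : Prop :=
  ∀ (o : Ordinal.{v}) (ho : (0 : Ordinal.{v}) < o)
    (D : (Set.Iio o : Set Ordinal.{v}) ⥤ K),
    Nonempty (PreservesColimits D) →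
    (∀ (β : Ordinal.{v}) (hβ : β + 1 < o),
      L (D.map (homOfLE (Subtype.mk_le_mk.mpr ((le_self_add : β ≤ β + 1))) :
        (⟨β, lt_of_le_of_lt ((le_self_add : β ≤ β + 1)) hβ⟩ : (Set.Iio o : Set Ordinal.{v})) ⟶
        ⟨β + 1, hβ⟩))) →
    ∀ (c : Cocone D), IsColimit c → L (c.ι.app ⟨0, ho⟩)

/-- A localizer for the class `Cof`: a class `W` with the 2-out-of-3 property, containing
`Cof^□`, and whose intersection with `Cof` is closed under pushouts and transfinite
compositions. -/
structure IsLocalizer (Cof W : MorphismProperty K) : Prop where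
  twoOutOfThree : TwoOutOfThree W
  rlp_le : ∀ ⦃X Y : K⦄ (f : X ⟶ Y), Rlp Cof f → W f
  pushout : StableUnderPushout (interClass Cof W)
  transfinite : ClosedUnderTransfiniteComposition (interClass Cof W)

/-- `W(S)`: the smallest localizer for `Cof` containing `S` (the intersection of all of them). -/
def smallestLocalizer (Cof S : MorphismProperty K) : MorphismProperty K :=
  fun _ _ f => ∀ W : MorphismProperty K, IsLocalizer Cof W →
    (∀ ⦃A B : K⦄ (s : A ⟶ B), S s → W s) → W f

/-- the smallest class containing `S` which is a localizer for `Cof` and moreover closed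
under retracts in the arrow category. -/
def smallestRetractLocalizer (Cof S : MorphismProperty K) : MorphismProperty K :=
  fun _ _ f => ∀ W : MorphismProperty K, IsLocalizer Cof W → RetractClosed W →
    (∀ ⦃A B : K⦄ (s : A ⟶ B), S s → W s) → W f

/-- the empty class of maps -/
def emptyClass (K : Type u) [Category.{v} K] : MorphismProperty K := fun _ _ _ => False

/-- a preorder is `κ`-directed if every subset of cardinality `< κ` has an upper bound -/
def IsCardinalDirected (κ : Cardinal.{v}) (J : Type v) [Preorder J] : Prop :=
  ∀ S : Set J, Cardinal.mk S < κ → ∃ j : J, ∀ s ∈ S, s ≤ j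

/-- an object `X` is `κ`-presentable if `Hom(X,-)` preserves `κ`-directed colimits -/
def IsPresentableObj (κ : Cardinal.{v}) (X : K) : Prop :=
  ∀ (J : Type v) [Preorder J], IsCardinalDirected κ J →
    Nonempty (PreservesColimitsOfShape J (coyoneda.obj (op X)))

/-- `X` is a `κ`-directed colimit of objects from the set `A` -/
def IsDirectedColimitFrom (κ : Cardinal.{v}) (A : Set K) (X : K) : Prop :=
  ∃ (J : Type v) (pre : Preorder J),
    letI := pre
    IsCardinalDirected κ J ∧
      ∃ (D : J ⥤ K) (c : Cocone D), Nonempty (IsColimit c) ∧ c.pt = X ∧ ∀ j : J, D.obj j ∈ A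

/-- `κ`-accessible category -/
structure IsCardinalAccessible (κ : Cardinal.{v}) (K : Type u) [Category.{v} K] : Prop where
  isRegular : κ.IsRegular
  hasDirectedColimits :
    ∀ (J : Type v) [Preorder J], IsCardinalDirected κ J → HasColimitsOfShape J K
  generators : ∃ A : Set K, Small.{v} A ∧ (∀ X ∈ A, IsPresentableObj κ X) ∧
    ∀ X : K, IsDirectedColimitFrom κ A X

/-- accessible category -/
def IsAccessibleCat (K : Type u) [Category.{v} K] : Prop :=
  ∃ κ : Cardinal.{v}, IsCardinalAccessible κ K

/-- locally presentable category: accessible and cocomplete -/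
def IsLocallyPresentable (K : Type u) [Category.{v} K] : Prop :=
  IsAccessibleCat K ∧ HasColimits K

/-- `F` preserves `κ`-directed colimits -/
def PreservesCardinalDirectedColimits (κ : Cardinal.{v}) {A : Type u₁} [Category.{v} A]
    {C : Type u₂} [Category.{v} C] (F : A ⥤ C) : Prop :=
  ∀ (J : Type v) [Preorder J], IsCardinalDirected κ J →
    Nonempty (PreservesColimitsOfShape J F)

/-- accessible functor -/
def IsAccessibleFunctor {A : Type u₁} [Category.{v} A] {C : Type u₂} [Category.{v} C]
    (F : A ⥤ C) : Prop :=
  ∃ κ : Cardinal.{v}, IsCardinalAccessible κ A ∧ IsCardinalAccessible κ C ∧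
    PreservesCardinalDirectedColimits κ F

/-- dual strong deformation retract -/
def DualStrongDeformationRetract [HasBinaryCoproducts K] (cyl : Cylinder K)
    {X Y : K} (f : X ⟶ Y) : Prop :=
  ∃ (g : Y ⟶ X) (h : cyl.C.obj X ⟶ X),
    g ≫ f = 𝟙 Y ∧ cyl.γ₀.app X ≫ h = 𝟙 X ∧ cyl.γ₁.app X ≫ h = f ≫ g ∧
      h ≫ f = cyl.σ.app X ≫ f


lemma htpEq_precomp [HasBinaryCoproducts K] (cyl : Cylinder K)
    {Z X T : K} (w : Z ⟶ X) {a b : X ⟶ T} (hab : HtpEq cyl a b) :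
    HtpEq cyl (w ≫ a) (w ≫ b) := by
  induction hab with
  | base hr =>
    obtain ⟨H, hH⟩ := hr
    refine STClos.base ⟨cyl.C.map w ≫ H, ?_⟩
    have hn := cyl.γ.naturality w
    dsimp [double] at hn
    rw [← Category.assoc, ← cyl.γ.naturality w, Category.assoc, hH]
    dsimp only [double]
    ext <;> simp
  | symm _ ih => exact ih.symm
  | trans _ _ ih1 ih2 => exact ih1.trans ih2

lemma dsdr_weq [HasBinaryCoproducts K] [HasPushouts K] [HasTerminal K]
    (cyl : Cylinder K) (S I : MorphismProperty K) {X Y : K} (f : X ⟶ Y)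
    (hf : DualStrongDeformationRetract cyl f) : Weq cyl S I f := by
  obtain ⟨g, h, hgf, h0, h1, hσ⟩ := hf
  simp only [Cylinder.γ₀, Cylinder.γ₁] at h0 h1
  intro T _
  constructor
  · intro t
    refine ⟨g ≫ t, STClos.symm (STClos.base ⟨h ≫ t, ?_⟩)⟩
    apply coprod.hom_ext
    · rw [coprod.inl_desc]; exact (Category.assoc (coprod.inl : X ⟶ X ⨿ X) (cyl.γ.app X) (h ≫ t)).symm.trans ((Category.assoc ((coprod.inl : X ⟶ X ⨿ X) ≫ cyl.γ.app X) h t).symm.trans ((h0 =≫ t).trans (Category.id_comp t)))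
    · rw [coprod.inr_desc]; exact (Category.assoc (coprod.inr : X ⟶ X ⨿ X) (cyl.γ.app X) (h ≫ t)).symm.trans ((Category.assoc ((coprod.inr : X ⟶ X ⨿ X) ≫ cyl.γ.app X) h t).symm.trans ((h1 =≫ t).trans (Category.assoc f g t)))
  · intro u v huv
    have := htpEq_precomp cyl g huv
    simpa only [← Category.assoc, hgf, Category.id_comp] using this

/-- Corollary: trivial fibrations are weak equivalences:
`C^□ ⊆ W(Cyl,S,I)`; indeed every dual strong deformation retract lies in `W(Cyl,S,I)`. -/
theorem statement14 {K : Type u} [Category.{v} K]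
    [HasInitial K] [HasTerminal K] [HasBinaryCoproducts K] [HasPushouts K]
    (hK : IsLocallyPresentable K)
    (Cof : MorphismProperty K) (hwfs : IsWFS Cof (Rlp Cof))
    (I : MorphismProperty K) (hIset : IsSmallClass I)
    (hIL : ∀ ⦃X Y : K⦄ (f : X ⟶ Y), I f → Cof f) (hgen : Cof = Llp (Rlp I))
    (hcof : AllCofibrant Cof)
    (cyl : Cylinder K) (hcyl : cyl.IsCylinderFor Cof) (hcart : cyl.IsCartesian Cof)
    (S : MorphismProperty K) (hS : ∀ ⦃X Y : K⦄ (f : X ⟶ Y), S f → Cof f) :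
    (∀ ⦃X Y : K⦄ (f : X ⟶ Y),
      DualStrongDeformationRetract cyl f → Weq cyl S I f) ∧
    (∀ ⦃X Y : K⦄ (f : X ⟶ Y), Rlp Cof f → Weq cyl S I f) := by
  refine ⟨fun X Y f hf => dsdr_weq cyl S I f hf, fun X Y f hf => ?_⟩
  refine dsdr_weq cyl S I f ?_
  haveI : HasLiftingProperty (initial.to Y) f := hf _ (hcof Y)
  have sq1 : CommSq (initial.to X) (initial.to Y) f (𝟙 Y) :=
    ⟨by apply Subsingleton.elim⟩
  set g := sq1.lift with hg
  haveI : HasLiftingProperty (cyl.γ.app X) f := hf _ (hcyl X)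
  have sq2 : CommSq (coprod.desc (𝟙 X) (f ≫ g)) (cyl.γ.app X) f (cyl.σ.app X ≫ f) := by
    constructor
    refine Eq.trans ?_ (Category.assoc (cyl.γ.app X) (cyl.σ.app X) f)
    rw [cyl.fac]
    show (coprod.desc (𝟙 X) (f ≫ g) : X ⨿ X ⟶ X) ≫ f = (coprod.desc (𝟙 X) (𝟙 X) : X ⨿ X ⟶ X) ≫ f
    simp only [coprod.desc_comp, Category.id_comp, Category.assoc, (sq1.fac_right : g ≫ f = 𝟙 Y), Category.comp_id]
    exact congrArg (coprod.desc f) ((congrArg (f ≫ ·) sq1.fac_right).trans (Category.comp_id f))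
  haveI : sq2.HasLift := this.sq_hasLift sq2
  refine ⟨g, sq2.lift, sq1.fac_right, ?_, ?_, sq2.fac_right⟩
  · show (coprod.inl ≫ cyl.γ.app X) ≫ sq2.lift = 𝟙 X
    exact (Category.assoc (coprod.inl : X ⟶ X ⨿ X) (cyl.γ.app X) sq2.lift).trans ((congrArg ((coprod.inl : X ⟶ X ⨿ X) ≫ ·) sq2.fac_left).trans (coprod.inl_desc _ _))
  · show (coprod.inr ≫ cyl.γ.app X) ≫ sq2.lift = f ≫ g
    exact (Category.assoc (coprod.inr : X ⟶ X ⨿ X) (cyl.γ.app X) sq2.lift).trans ((congrArg ((coprod.inr : X ⟶ X ⨿ X) ≫ ·) sq2.fac_left).trans (coprod.inr_desc _ _))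

end Paper
end

section
/- Let K be a locally presentable category, (C, C^□) a cofibrant weak factorization system generated by a set I ⊆ C, (Cyl, γ, σ) a cartesian cylinder for (C, C^□), and S ⊆ C a subset. Suppose X and Y are fibrant objects. Then a map f: X → Y lies in W(Cyl,S,I) if and only if there exists g: Y → X with g ∘ f homotopic to id_X and f ∘ g homotopic to id_Y. -/
/-!
Common definitions: weak factorization systems, functorial cylinders,
Cisinski's construction, localizers, locally presentable categories.
-/

universe w v u u₁ u₂ u₃

open CategoryTheory Limits Opposite

namespace Paper

variable {K : Type u} [Category.{v} K]

section StatementSixteenHelpers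

variable {K : Type u} [Category.{v} K] [HasBinaryCoproducts K]

lemma htp_refl (cyl : Cylinder K) {A T : K} (a : A ⟶ T) : Htp cyl a a := by
  refine ⟨cyl.σ.app A ≫ a, ?_⟩
  erw [← Category.assoc, cyl.fac, coprod.desc_comp, Category.id_comp]

lemma htp_post (cyl : Cylinder K) {A T T' : K} {a b : A ⟶ T} (h : Htp cyl a b) (u : T ⟶ T') :
    Htp cyl (a ≫ u) (b ≫ u) := by
  obtain ⟨H, hH⟩ := h
  exact ⟨H ≫ u, by erw [← Category.assoc, hH, coprod.desc_comp]⟩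

lemma htp_pre (cyl : Cylinder K) {Z A T : K} {a b : A ⟶ T} (h : Htp cyl a b) (w : Z ⟶ A) :
    Htp cyl (w ≫ a) (w ≫ b) := by
  obtain ⟨H, hH⟩ := h
  refine ⟨cyl.C.map w ≫ H, ?_⟩
  have hnat := cyl.γ.naturality w
  dsimp [double] at hnat
  erw [← Category.assoc, ← hnat, Category.assoc, hH, coprod.map_desc]

lemma htpEq_post (cyl : Cylinder K) {A T T' : K} {a b : A ⟶ T} (h : HtpEq cyl a b) (u : T ⟶ T') :
    HtpEq cyl (a ≫ u) (b ≫ u) := by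
  induction h with
  | base h => exact .base (htp_post cyl h u)
  | symm _ ih => exact .symm ih
  | trans _ _ ih1 ih2 => exact .trans ih1 ih2

lemma htpEq_pre (cyl : Cylinder K) {Z A T : K} {a b : A ⟶ T} (h : HtpEq cyl a b) (w : Z ⟶ A) :
    HtpEq cyl (w ≫ a) (w ≫ b) := by
  induction h with
  | base h => exact .base (htp_pre cyl h w)
  | symm _ ih => exact .symm ih
  | trans _ _ ih1 ih2 => exact .trans ih1 ih2

variable [HasPushouts K] [HasTerminal K]

lemma γ₀_app_eq (cyl : Cylinder K) (A : K) :
    cyl.γ₀.app A = coprod.inl ≫ cyl.γ.app A := rfl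

lemma γ₁_app_eq (cyl : Cylinder K) (A : K) :
    cyl.γ₁.app A = coprod.inr ≫ cyl.γ.app A := rfl

lemma end₀ (cyl : Cylinder K) {A T : K} {a b : A ⟶ T} {H : cyl.C.obj A ⟶ T}
    (hH : cyl.γ.app A ≫ H = coprod.desc a b) : cyl.γ₀.app A ≫ H = a := by
  erw [γ₀_app_eq, Category.assoc, hH, coprod.inl_desc]

lemma end₁ (cyl : Cylinder K) {A T : K} {a b : A ⟶ T} {H : cyl.C.obj A ⟶ T}
    (hH : cyl.γ.app A ≫ H = coprod.desc a b) : cyl.γ₁.app A ≫ H = b := by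
  erw [γ₁_app_eq, Category.assoc, hH, coprod.inr_desc]

/-- Key lemma: for fibrant `T`, homotopies `a ∼ b` and `a ∼ c` yield `c ∼ b`. -/
lemma htp_compose (Cof : MorphismProperty K)
    (I : MorphismProperty K) (hgen : Cof = Llp (Rlp I))
    (cyl : Cylinder K) (hcyl : cyl.IsCylinderFor Cof) (hadj : cyl.C.IsLeftAdjoint)
    (S : MorphismProperty K) {T : K} (hT : Fibrant cyl S I T)
    {A : K} {a b c : A ⟶ T} (hab : Htp cyl a b) (hac : Htp cyl a c) : Htp cyl c b := by
  letI := hadj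
  set R := cyl.C.rightAdjoint with hR
  let adj : cyl.C ⊣ R := Adjunction.ofIsLeftAdjoint cyl.C
  set ev : R.obj T ⟶ T := cyl.γ₀.app (R.obj T) ≫ adj.counit.app T with hev_def
  -- `ev` has the RLP against `I`
  have hev : Rlp I ev := by
    intro U V i hi
    constructor
    intro ftop fbot sq
    have w1 : i ≫ fbot = cyl.γ₀.app U ≫ (cyl.C.map ftop ≫ adj.counit.app T) := by
      have hnat := cyl.γ₀.naturality ftop
      dsimp only [Functor.id_map] at hnat
      rw [← Category.assoc, ← hnat, Category.assoc, ← hev_def, sq.w]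
    have hj : Lambda cyl S I (starMap cyl.γ₀ i) := ⟨0, Or.inr (Or.inl ⟨U, V, i, hi, rfl⟩)⟩
    haveI := hT _ hj
    have sq2 : CommSq (pushout.desc fbot (cyl.C.map ftop ≫ adj.counit.app T) w1)
        (starMap cyl.γ₀ i) (terminal.from T) (terminal.from _) := ⟨by simp⟩
    set G : cyl.C.obj V ⟶ T := sq2.lift with hGdef
    have hG := sq2.fac_left
    have einl : pushout.inl _ _ ≫ starMap cyl.γ₀ i = cyl.γ₀.app V := pushout.inl_desc _ _ _
    have einr : pushout.inr _ _ ≫ starMap cyl.γ₀ i = cyl.C.map i := pushout.inr_desc _ _ _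
    have hGl : cyl.γ₀.app V ≫ G = fbot := by
      rw [← einl, Category.assoc, hG, pushout.inl_desc]
    have hGr : cyl.C.map i ≫ G = cyl.C.map ftop ≫ adj.counit.app T := by
      rw [← einr, Category.assoc, hG, pushout.inr_desc]
    refine ⟨⟨⟨adj.homEquiv V T G, ?_, ?_⟩⟩⟩
    · have h2 := (adj.homEquiv U T).apply_symm_apply ftop
      rw [Adjunction.homEquiv_counit] at h2
      rw [← Adjunction.homEquiv_naturality_left, hGr, h2]
    · have h3 := (adj.homEquiv V T).symm_apply_apply G
      rw [Adjunction.homEquiv_counit] at h3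
      have hnat := cyl.γ₀.naturality (adj.homEquiv V T G)
      dsimp only [Functor.id_map] at hnat
      rw [hev_def, ← Category.assoc, hnat, Category.assoc, h3, hGl]
  -- `γ_A` lifts against `ev`
  haveI hlift : HasLiftingProperty (cyl.γ.app A) ev := by
    have h1 := hcyl A
    rw [hgen] at h1
    exact h1 ev hev
  obtain ⟨H, hH⟩ := hab
  obtain ⟨H', hH'⟩ := hac
  have hconstH : cyl.γ.app A ≫ (cyl.σ.app A ≫ b) = coprod.desc b b := by
    erw [← Category.assoc, cyl.fac, coprod.desc_comp, Category.id_comp]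
  letI : PreservesColimitsOfSize.{0, 0} cyl.C := adj.leftAdjoint_preservesColimits
  set u₁ : cyl.C.obj (A ⨿ A) ⟶ T :=
    inv (Limits.coprodComparison cyl.C A A) ≫ coprod.desc H' (cyl.σ.app A ≫ b) with hu₁_def
  have hu₁l : cyl.C.map coprod.inl ≫ u₁ = H' := by
    rw [hu₁_def, ← Category.assoc, Limits.map_inl_inv_coprodComparison, coprod.inl_desc]
  have hu₁r : cyl.C.map coprod.inr ≫ u₁ = cyl.σ.app A ≫ b := by
    rw [hu₁_def, ← Category.assoc, Limits.map_inr_inv_coprodComparison, coprod.inr_desc]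
  set t : (A ⨿ A : K) ⟶ R.obj T := adj.homEquiv _ T u₁ with ht_def
  have htu : cyl.C.map t ≫ adj.counit.app T = u₁ := by
    have h := (adj.homEquiv (A ⨿ A) T).symm_apply_apply u₁
    rw [Adjunction.homEquiv_counit] at h
    rw [ht_def]
    exact h
  have hnatl0 := cyl.γ₀.naturality (coprod.inl : A ⟶ A ⨿ A)
  have hnatr0 := cyl.γ₀.naturality (coprod.inr : A ⟶ A ⨿ A)
  have hnatl1 := cyl.γ₁.naturality (coprod.inl : A ⟶ A ⨿ A)
  have hnatr1 := cyl.γ₁.naturality (coprod.inr : A ⟶ A ⨿ A)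
  dsimp only [Functor.id_map] at hnatl0 hnatr0 hnatl1 hnatr1
  -- the bottom face of the lifting square
  have hend0 : cyl.γ₀.app (A ⨿ A) ≫ u₁ = cyl.γ.app A ≫ H := by
    apply coprod.hom_ext
    · erw [← Category.assoc, hnatl0, Category.assoc, hu₁l, end₀ cyl hH', ← Category.assoc,
        ← γ₀_app_eq, end₀ cyl hH]
    · erw [← Category.assoc, hnatr0, Category.assoc, hu₁r, end₀ cyl hconstH, ← Category.assoc,
        ← γ₁_app_eq, end₁ cyl hH]
  have sq3 : CommSq t (cyl.γ.app A) ev H := by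
    constructor
    have hnat := cyl.γ₀.naturality t
    dsimp only [Functor.id_map] at hnat
    rw [hev_def, ← Category.assoc, hnat, Category.assoc, htu]
    exact hend0
  haveI := hlift.sq_hasLift sq3
  set l : cyl.C.obj A ⟶ R.obj T := sq3.lift (hsq := this) with hldef
  have hl1 : cyl.γ.app A ≫ l = t := sq3.fac_left (hsq := this)
  refine ⟨cyl.γ₁.app (cyl.C.obj A) ≫ cyl.C.map l ≫ adj.counit.app T, ?_⟩
  have hnatγ := cyl.γ₁.naturality (cyl.γ.app A)
  dsimp only [Functor.id_map, double_obj] at hnatγ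
  erw [← Category.assoc, hnatγ, Category.assoc, ← Functor.map_comp_assoc, hl1, htu]
  apply coprod.hom_ext
  · erw [← Category.assoc, hnatl1, Category.assoc, hu₁l, end₁ cyl hH', coprod.inl_desc]
  · erw [← Category.assoc, hnatr1, Category.assoc, hu₁r, end₁ cyl hconstH, coprod.inr_desc]

lemma htp_of_htpEq (Cof : MorphismProperty K)
    (I : MorphismProperty K) (hgen : Cof = Llp (Rlp I))
    (cyl : Cylinder K) (hcyl : cyl.IsCylinderFor Cof) (hadj : cyl.C.IsLeftAdjoint)
    (S : MorphismProperty K) {T : K} (hT : Fibrant cyl S I T)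
    {A : K} {a b : A ⟶ T} (h : HtpEq cyl a b) : Htp cyl a b := by
  have hsymm : ∀ {x y : A ⟶ T}, Htp cyl x y → Htp cyl y x := fun hxy =>
    htp_compose Cof I hgen cyl hcyl hadj S hT (htp_refl cyl _) hxy
  have htrans : ∀ {x y z : A ⟶ T}, Htp cyl x y → Htp cyl y z → Htp cyl x z := fun hxy hyz =>
    hsymm (htp_compose Cof I hgen cyl hcyl hadj S hT (hsymm hxy) hyz)
  induction h with
  | base h => exact h
  | symm _ ih => exact hsymm ih
  | trans _ _ ih1 ih2 => exact htrans ih1 ih2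

end StatementSixteenHelpers

/-- Corollary: weak equivalences between fibrant objects are the
homotopy equivalences. -/
theorem statement16 {K : Type u} [Category.{v} K]
    [HasInitial K] [HasTerminal K] [HasBinaryCoproducts K] [HasPushouts K]
    (hK : IsLocallyPresentable K)
    (Cof : MorphismProperty K) (hwfs : IsWFS Cof (Rlp Cof))
    (I : MorphismProperty K) (hIset : IsSmallClass I)
    (hIL : ∀ ⦃X Y : K⦄ (f : X ⟶ Y), I f → Cof f) (hgen : Cof = Llp (Rlp I))
    (hcof : AllCofibrant Cof)
    (cyl : Cylinder K) (hcyl : cyl.IsCylinderFor Cof) (hcart : cyl.IsCartesian Cof)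
    (S : MorphismProperty K) (hS : ∀ ⦃X Y : K⦄ (f : X ⟶ Y), S f → Cof f)
    {X Y : K} (hX : Fibrant cyl S I X) (hY : Fibrant cyl S I Y) (f : X ⟶ Y) :
    Weq cyl S I f ↔
      ∃ g : Y ⟶ X, Htp cyl (f ≫ g) (𝟙 X) ∧ Htp cyl (g ≫ f) (𝟙 Y) := by
  constructor
  · intro hw
    obtain ⟨g, hg⟩ := (hw X hX).1 (𝟙 X)
    -- hg : HtpEq cyl (f ≫ g) (𝟙 X)
    have hgf : HtpEq cyl (g ≫ f) (𝟙 Y) := by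
      apply (hw Y hY).2
      have := htpEq_post cyl hg f
      rw [Category.id_comp] at this
      rw [Category.comp_id, ← Category.assoc]
      exact this
    exact ⟨g, htp_of_htpEq Cof I hgen cyl hcyl hcart.leftAdjoint S hX hg,
      htp_of_htpEq Cof I hgen cyl hcyl hcart.leftAdjoint S hY hgf⟩
  · rintro ⟨g, h1, h2⟩ T hT
    constructor
    · intro t
      refine ⟨g ≫ t, ?_⟩
      have := htp_post cyl h1 t
      rw [Category.id_comp, Category.assoc] at this
      exact .base this
    · intro u v huv
      have hu : Htp cyl (g ≫ f ≫ u) u := by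
        have := htp_post cyl h2 u
        rw [Category.id_comp, Category.assoc] at this
        exact this
      have hv : Htp cyl (g ≫ f ≫ v) v := by
        have := htp_post cyl h2 v
        rw [Category.id_comp, Category.assoc] at this
        exact this
      have hmid : HtpEq cyl (g ≫ f ≫ u) (g ≫ f ≫ v) := htpEq_pre cyl huv g
      exact .trans (.symm (.base hu)) (.trans hmid (.base hv))

end Paper
end
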